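/- Let g^{αβ̄}(z) = (e^s/u'(s))δ^{αβ} + z^α z̄^β(1/u''(s) - 1/u'(s)) with s = log|z|², and let f(z) = P(log|z|²). Then the gradient coefficients satisfy g^{αβ̄}·∂f/∂z̄^β = (P'(s)/u''(s))·z^α; consequently, the vector field ∇f = g^{αβ̄}(∂f/∂z̄^β)·∂/∂z^α is holomorphic on ℂⁿ∖{0} if and only if P'(s)/u''(s) is a constant c, and in that case ∇f equals c times the holomorphic Euler vector field z^α·∂/∂z^α. -/

import Mathlib

/-- The variable `s = log|z|²` associated to a point of `ℂⁿ∖{0}`. -/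
noncomputable def sOf {n : ℕ} (z : EuclideanSpace ℂ (Fin n)) : ℝ :=
  Real.log (‖z‖ ^ 2)

lemma sum_conj_mul {n : ℕ} (z : EuclideanSpace ℂ (Fin n)) :
    ∑ β, (starRingEnd ℂ) (z β) * z β = ((‖z‖ ^ 2 : ℝ) : ℂ) := by
  have h1 : ∀ β, (starRingEnd ℂ) (z β) * z β = ((‖z β‖ ^ 2 : ℝ) : ℂ) := by
    intro β
    rw [mul_comm, Complex.mul_conj]
    norm_cast
    rw [Complex.normSq_eq_norm_sq]
  simp only [h1]
  rw [← Complex.ofReal_sum]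
  congr 1
  rw [EuclideanSpace.norm_eq]
  rw [Real.sq_sqrt (Finset.sum_nonneg fun i _ => sq_nonneg _)]

lemma exp_sOf {n : ℕ} (z : EuclideanSpace ℂ (Fin n)) (hz : z ≠ 0) :
    Real.exp (sOf z) = ‖z‖ ^ 2 := by
  rw [sOf, Real.exp_log (pow_pos (norm_pos_iff.mpr hz) 2)]

lemma key {n : ℕ} (p q dP : ℝ → ℝ)
    (hp : ∀ s, 0 < p s) (hq : ∀ s, 0 < q s)
    (ginv : EuclideanSpace ℂ (Fin n) → Matrix (Fin n) (Fin n) ℂ)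
    (hginv : ∀ z, z ≠ 0 → ∀ α β, ginv z α β
      = ((Real.exp (sOf z) / p (sOf z) : ℝ) : ℂ) * (if α = β then 1 else 0)
        + z α * (starRingEnd ℂ) (z β) * ((1 / q (sOf z) - 1 / p (sOf z) : ℝ) : ℂ))
    (z : EuclideanSpace ℂ (Fin n)) (hz : z ≠ 0) (α : Fin n) :
    ∑ β, ginv z α β * (((dP (sOf z) * Real.exp (-(sOf z)) : ℝ) : ℂ) * z β)
        = ((dP (sOf z) / q (sOf z) : ℝ) : ℂ) * z α := by
  have hpne : (p (sOf z) : ℝ) ≠ 0 := (hp _).ne'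
  have hqne : (q (sOf z) : ℝ) ≠ 0 := (hq _).ne'
  have hE : Real.exp (sOf z) = ‖z‖ ^ 2 := exp_sOf z hz
  have hEne : (‖z‖ : ℝ) ^ 2 ≠ 0 := by
    rw [← hE]; exact (Real.exp_pos _).ne'
  simp only [hginv z hz, add_mul, Finset.sum_add_distrib]
  have h1 : ∑ β, (((Real.exp (sOf z) / p (sOf z) : ℝ) : ℂ) * (if α = β then 1 else 0))
      * (((dP (sOf z) * Real.exp (-(sOf z)) : ℝ) : ℂ) * z β)
      = ((Real.exp (sOf z) / p (sOf z) : ℝ) : ℂ)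
        * (((dP (sOf z) * Real.exp (-(sOf z)) : ℝ) : ℂ) * z α) := by
    rw [Finset.sum_eq_single α]
    · simp
    · intro b _ hb
      simp [Ne.symm hb]
    · simp
  have h2 : ∑ β, (z α * (starRingEnd ℂ) (z β) * ((1 / q (sOf z) - 1 / p (sOf z) : ℝ) : ℂ))
      * (((dP (sOf z) * Real.exp (-(sOf z)) : ℝ) : ℂ) * z β)
      = z α * ((1 / q (sOf z) - 1 / p (sOf z) : ℝ) : ℂ)
        * ((dP (sOf z) * Real.exp (-(sOf z)) : ℝ) : ℂ) * ((‖z‖ ^ 2 : ℝ) : ℂ) := by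
    rw [← sum_conj_mul z, Finset.mul_sum]
    congr 1; ext β; ring
  set S := sOf z with hS
  set A := Real.exp S / p S with hA
  set C := dP S * Real.exp (-S) with hC
  set B := 1 / q S - 1 / p S with hB
  rw [h1, h2, ← hE]
  have hreal : A * C + B * C * Real.exp S = dP S / q S := by
    rw [hA, hC, hB, Real.exp_neg]
    have hexpne : Real.exp S ≠ 0 := (Real.exp_pos _).ne'
    field_simp
    ring
  rw [← hreal]
  push_cast
  ring

theorem stmt19 (n : ℕ) (hn : 2 ≤ n) (p q dP : ℝ → ℝ)
    (hp : ∀ s, 0 < p s) (hq : ∀ s, 0 < q s)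
    (ginv : EuclideanSpace ℂ (Fin n) → Matrix (Fin n) (Fin n) ℂ)
    (hginv : ∀ z, z ≠ 0 → ∀ α β, ginv z α β
      = ((Real.exp (sOf z) / p (sOf z) : ℝ) : ℂ) * (if α = β then 1 else 0)
        + z α * (starRingEnd ℂ) (z β) * ((1 / q (sOf z) - 1 / p (sOf z) : ℝ) : ℂ)) :
    (∀ z : EuclideanSpace ℂ (Fin n), z ≠ 0 → ∀ α,
      ∑ β, ginv z α β * (((dP (sOf z) * Real.exp (-(sOf z)) : ℝ) : ℂ) * z β)
        = ((dP (sOf z) / q (sOf z) : ℝ) : ℂ) * z α)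
    ∧ ((∃ c : ℝ, ∀ s, dP s / q s = c) ↔
        (∃ c : ℝ, ∀ z : EuclideanSpace ℂ (Fin n), z ≠ 0 → ∀ α,
          ∑ β, ginv z α β * (((dP (sOf z) * Real.exp (-(sOf z)) : ℝ) : ℂ) * z β)
            = (c : ℂ) * z α)) := by
  have hkey := key p q dP hp hq ginv hginv
  refine ⟨hkey, ?_, ?_⟩
  · rintro ⟨c, hc⟩
    exact ⟨c, fun z hz α => by rw [hkey z hz α, hc]⟩
  · rintro ⟨c, hc⟩
    refine ⟨c, fun s => ?_⟩
    -- build a witness z with sOf z = s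
    set r : ℝ := Real.exp (s / 2) with hr
    have hrpos : 0 < r := Real.exp_pos _
    set z : EuclideanSpace ℂ (Fin n) := EuclideanSpace.single (⟨0, by omega⟩ : Fin n) (r : ℂ)
      with hzdef
    have hz0 : z (⟨0, by omega⟩ : Fin n) = (r : ℂ) := by
      simp [hzdef, EuclideanSpace.single_apply]
    have hnorm : ‖z‖ = r := by
      rw [hzdef, EuclideanSpace.norm_single, Complex.norm_real,
        Real.norm_of_nonneg hrpos.le]
    have hzne : z ≠ 0 := by
      intro h
      rw [h, norm_zero] at hnorm
      exact hrpos.ne' hnorm.symm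
    have hs : sOf z = s := by
      rw [sOf, hnorm, hr, sq, ← Real.exp_add, Real.log_exp]
      ring
    have := hc z hzne (⟨0, by omega⟩ : Fin n)
    rw [hkey z hzne, hs, hz0] at this
    have hrne : (r : ℂ) ≠ 0 := by exact_mod_cast hrpos.ne'
    have hcz := mul_right_cancel₀ hrne this
    exact_mod_cast hcz
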